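/- The polynomial X^4 - 4X^3 - X^2 + 4X - 1 (the characteristic polynomial of the matrix A2) has four pairwise distinct real roots, and none of these roots equals 1 or -1; hence A2 is a hyperbolic operator (it has four distinct real eigenvalues, none of absolute value 1). -/

import Mathlib

open Matrix Polynomial

def A2R : Matrix (Fin 4) (Fin 4) ℝ :=
  !![0, 1, 0, 0; 0, 0, 1, 0; 0, 0, 0, 1; 1, -4, 1, 4]

/-- The characteristic polynomial of `A2`, as a real polynomial. -/
noncomputable def p2 : Polynomial ℝ := X ^ 4 - 4 * X ^ 3 - X ^ 2 + 4 * X - 1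

lemma p2_eval (x : ℝ) : p2.eval x = x ^ 4 - 4 * x ^ 3 - x ^ 2 + 4 * x - 1 := by
  simp [p2]

lemma det_key (μ : ℝ) :
    (algebraMap ℝ (Matrix (Fin 4) (Fin 4) ℝ) μ - A2R).det = p2.eval μ := by
  rw [p2_eval]
  have h : algebraMap ℝ (Matrix (Fin 4) (Fin 4) ℝ) μ - A2R =
      !![μ, -1, 0, 0; 0, μ, -1, 0; 0, 0, μ, -1; -1, 4, -1, μ - 4] := by
    ext i j
    simp [A2R, Matrix.algebraMap_eq_diagonal, Matrix.diagonal]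
    fin_cases i <;> fin_cases j <;> simp
  rw [h]
  simp [Matrix.det_succ_row_zero, Fin.sum_univ_succ, Fin.succAbove]
  ring

lemma p2_natDegree : p2.natDegree = 4 := by
  unfold p2; compute_degree!

lemma p2_ne_zero : p2 ≠ 0 := by
  intro h
  have := p2_eval 5
  rw [h] at this
  norm_num at this

lemma root_in_Icc_up {a b : ℝ} (hab : a ≤ b) (ha : p2.eval a ≤ 0) (hb : 0 ≤ p2.eval b) :
    ∃ x ∈ Set.Icc a b, p2.eval x = 0 := by
  have h := intermediate_value_Icc hab p2.continuous.continuousOn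
  obtain ⟨x, hx, hx0⟩ := h ⟨ha, hb⟩
  exact ⟨x, hx, hx0⟩

lemma root_in_Icc_down {a b : ℝ} (hab : a ≤ b) (ha : 0 ≤ p2.eval a) (hb : p2.eval b ≤ 0) :
    ∃ x ∈ Set.Icc a b, p2.eval x = 0 := by
  have h := intermediate_value_Icc' hab p2.continuous.continuousOn
  obtain ⟨x, hx, hx0⟩ := h ⟨hb, ha⟩
  exact ⟨x, hx, hx0⟩

theorem statement10 :
    ∃ r : Fin 4 → ℝ,
      Function.Injective r ∧
      (∀ i, p2.eval (r i) = 0) ∧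
      (∀ x : ℝ, p2.eval x = 0 → ∃ i, x = r i) ∧
      (∀ i, r i ≠ 1 ∧ r i ≠ -1) ∧
      (∀ i, r i ∈ spectrum ℝ A2R) ∧
      (∀ i, |r i| ≠ 1) := by
  obtain ⟨x0, ⟨h0l, h0r⟩, hx0⟩ : ∃ x ∈ Set.Icc (-11/10 : ℝ) (-21/20), p2.eval x = 0 := by
    apply root_in_Icc_down <;> norm_num [p2_eval]
  obtain ⟨x1, ⟨h1l, h1r⟩, hx1⟩ : ∃ x ∈ Set.Icc (1/4 : ℝ) (3/10), p2.eval x = 0 := by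
    apply root_in_Icc_up <;> norm_num [p2_eval]
  obtain ⟨x2, ⟨h2l, h2r⟩, hx2⟩ : ∃ x ∈ Set.Icc (7/10 : ℝ) (4/5), p2.eval x = 0 := by
    apply root_in_Icc_down <;> norm_num [p2_eval]
  obtain ⟨x3, ⟨h3l, h3r⟩, hx3⟩ : ∃ x ∈ Set.Icc (4 : ℝ) 5, p2.eval x = 0 := by
    apply root_in_Icc_up <;> norm_num [p2_eval]
  have hne1 : ∀ i, (![x0, x1, x2, x3] : Fin 4 → ℝ) i ≠ 1 ∧ (![x0, x1, x2, x3] : Fin 4 → ℝ) i ≠ -1 := by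
    intro i
    fin_cases i <;> constructor <;> (intro h; simp_all) <;> linarith
  refine ⟨![x0, x1, x2, x3], ?_, ?_, ?_, hne1, ?_, ?_⟩
  · intro i j hij
    fin_cases i <;> fin_cases j <;> simp_all <;> linarith
  · intro i; fin_cases i <;> simpa
  · intro x hx
    by_contra hne
    push_neg at hne
    have hne0 : x ≠ x0 := by have := hne 0; simpa using this
    have hne1' : x ≠ x1 := by have := hne 1; simpa using this
    have hne2 : x ≠ x2 := by have := hne 2; simpa using this
    have hne3 : x ≠ x3 := by have := hne 3; simpa using this
    have hmem : ∀ y : ℝ, p2.eval y = 0 → y ∈ p2.roots.toFinset := by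
      intro y hy
      rw [Multiset.mem_toFinset, Polynomial.mem_roots p2_ne_zero]
      exact hy
    have hsub : ({x, x0, x1, x2, x3} : Finset ℝ) ⊆ p2.roots.toFinset := by
      intro y hy
      simp only [Finset.mem_insert, Finset.mem_singleton] at hy
      rcases hy with h|h|h|h|h <;> subst h <;>
        [exact hmem _ hx; exact hmem _ hx0; exact hmem _ hx1; exact hmem _ hx2; exact hmem _ hx3]
    have d01 : x0 ≠ x1 := by intro h; rw [h] at h0r; linarith
    have d02 : x0 ≠ x2 := by intro h; rw [h] at h0r; linarith
    have d03 : x0 ≠ x3 := by intro h; rw [h] at h0r; linarith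
    have d12 : x1 ≠ x2 := by intro h; rw [h] at h1r; linarith
    have d13 : x1 ≠ x3 := by intro h; rw [h] at h1r; linarith
    have d23 : x2 ≠ x3 := by intro h; rw [h] at h2r; linarith
    have hcard5 : ({x, x0, x1, x2, x3} : Finset ℝ).card = 5 := by
      simp [Finset.card_insert_of_notMem, hne0, hne1', hne2, hne3, d01, d02, d03, d12, d13, d23]
    have h1 : ({x, x0, x1, x2, x3} : Finset ℝ).card ≤ p2.roots.toFinset.card :=
      Finset.card_le_card hsub
    have h2 : p2.roots.toFinset.card ≤ Multiset.card p2.roots :=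
      Multiset.toFinset_card_le _
    have h3 : Multiset.card p2.roots ≤ p2.natDegree := Polynomial.card_roots' p2
    rw [hcard5, p2_natDegree] at *
    omega
  · intro i
    have hroot : p2.eval (![x0, x1, x2, x3] i) = 0 := by fin_cases i <;> simpa
    rw [spectrum.mem_iff]
    intro hu
    rw [Matrix.isUnit_iff_isUnit_det, det_key, hroot] at hu
    exact hu.ne_zero rfl
  · intro i
    obtain ⟨h1, h2⟩ := hne1 i
    intro h
    rw [abs_eq (by norm_num : (0:ℝ) ≤ 1)] at h
    tauto
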